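/- Suppose X and Y are jointly normal with mean zero, unit variances, and correlation ρ. Define two-sided p-values p₂(X) = 2(1 − Φ(|X|)) and p₂(Y) = 2(1 − Φ(|Y|)). Then Cov(p₂(X), p₂(Y)) ≥ 0. -/

import Mathlib

open MeasureTheory ProbabilityTheory Filter Topology

section Aux
open Set Real
open scoped ENNReal NNReal

lemma pdf_even (v : ℝ≥0) (x : ℝ) : gaussianPDFReal 0 v (-x) = gaussianPDFReal 0 v x := by
  simp only [gaussianPDFReal]; ring_nf

lemma pdf_cont (v : ℝ≥0) : Continuous (gaussianPDFReal 0 v) := by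
  unfold gaussianPDFReal; fun_prop

lemma core_interval (v : ℝ≥0) {w c c' : ℝ} (hw : 0 ≤ w) (hc : 0 ≤ c) (hcc : c ≤ c') :
    ∫ x in (-w-c')..(w-c'), gaussianPDFReal 0 v x ≤
      ∫ x in (-w-c)..(w-c), gaussianPDFReal 0 v x := by
  have hint : ∀ a b : ℝ, IntervalIntegrable (gaussianPDFReal 0 v) volume a b :=
    fun a b => (pdf_cont v).intervalIntegrable a b
  have h1 : (∫ x in (-w-c')..(w-c'), gaussianPDFReal 0 v x) +
      (∫ x in (w-c')..(w-c), gaussianPDFReal 0 v x) =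
      (∫ x in (-w-c')..(-w-c), gaussianPDFReal 0 v x) +
      (∫ x in (-w-c)..(w-c), gaussianPDFReal 0 v x) := by
    rw [intervalIntegral.integral_add_adjacent_intervals (hint _ _) (hint _ _),
      intervalIntegral.integral_add_adjacent_intervals (hint _ _) (hint _ _)]
  have h2 : (∫ x in (-w-c')..(-w-c), gaussianPDFReal 0 v x) =
      ∫ s in c..c', gaussianPDFReal 0 v (w+s) := by
    have e1 : (∫ s in c..c', gaussianPDFReal 0 v (w+s)) =
        ∫ s in (w+c)..(w+c'), gaussianPDFReal 0 v s :=
      intervalIntegral.integral_comp_add_left _ w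
    have e2 : (∫ x in (-(w+c'))..(-(w+c)), gaussianPDFReal 0 v x) =
        ∫ x in (w+c)..(w+c'), gaussianPDFReal 0 v (-x) := by
      rw [intervalIntegral.integral_comp_neg (fun t => gaussianPDFReal 0 v t)]
    simp only [pdf_even] at e2
    rw [e1, ← e2]
    congr 1 <;> ring
  have h3 : (∫ x in (w-c')..(w-c), gaussianPDFReal 0 v x) =
      ∫ s in c..c', gaussianPDFReal 0 v (w-s) := by
    have e2 : (∫ s in (-c')..(-c), gaussianPDFReal 0 v (w+s)) =
        ∫ s in c..c', gaussianPDFReal 0 v (w + -s) := by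
      rw [intervalIntegral.integral_comp_neg (fun t => gaussianPDFReal 0 v (w+t))]
    have e1 : (∫ s in (-c')..(-c), gaussianPDFReal 0 v (w+s)) =
        ∫ s in (w+-c')..(w+-c), gaussianPDFReal 0 v s :=
      intervalIntegral.integral_comp_add_left _ w
    rw [show w-c' = w+-c' by ring, show w-c = w+-c by ring, ← e1, e2]
    simp only [← sub_eq_add_neg]
  have key : (∫ s in c..c', gaussianPDFReal 0 v (w+s)) ≤
      ∫ s in c..c', gaussianPDFReal 0 v (w-s) := by
    apply intervalIntegral.integral_mono_on hcc
      (((pdf_cont v).comp (continuous_const.add continuous_id)).intervalIntegrable _ _)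
      (((pdf_cont v).comp (continuous_const.sub continuous_id)).intervalIntegrable _ _)
    intro s hs
    simp only [Function.comp_apply, id_eq]
    have hs0 : 0 ≤ s := hc.trans hs.1
    simp only [gaussianPDFReal_def, sub_zero]
    apply mul_le_mul_of_nonneg_left _ (by positivity)
    apply Real.exp_le_exp.2
    rcases eq_or_ne v 0 with hv | hv
    · simp [hv]
    · have h2v : (0:ℝ) < 2 * v := by positivity
      have hsq : (w - s)^2 ≤ (w + s)^2 := by nlinarith
      have := div_le_div_of_nonneg_right (neg_le_neg hsq) h2v.le
      simp only [Pi.add_apply, Pi.sub_apply, id_eq]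
      linarith [this]
  linarith [h1, h2, h3, key]


lemma gauss_symm (v : ℝ≥0) (c w : ℝ) :
    gaussianReal (-c) v (Set.Ioo (-w) w) = gaussianReal c v (Set.Ioo (-w) w) := by
  have h := gaussianReal_map_const_mul (μ := c) (v := v) (-1)
  have hv : NNReal.mk ((-1:ℝ)^2) (sq_nonneg _) = 1 := by
    ext; norm_num
  rw [hv, one_mul] at h
  have h2 : gaussianReal (-c) v (Set.Ioo (-w) w)
      = (Measure.map (fun x => -1*x) (gaussianReal c v)) (Set.Ioo (-w) w) := by
    rw [h]; norm_num
  rw [h2, Measure.map_apply (by fun_prop) measurableSet_Ioo]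
  congr 1
  ext x
  simp only [Set.mem_preimage, Set.mem_Ioo]
  constructor <;> (rintro ⟨h1, h2⟩; constructor <;> linarith)

lemma gauss_abs (v : ℝ≥0) (c w : ℝ) :
    gaussianReal |c| v (Set.Ioo (-w) w) = gaussianReal c v (Set.Ioo (-w) w) := by
  rcases abs_choice c with h | h
  · rw [h]
  · rw [h, gauss_symm]

lemma gauss_shift (v : ℝ≥0) (c w : ℝ) :
    gaussianReal c v (Set.Ioo (-w) w) = gaussianReal 0 v (Set.Ioo (-w-c) (w-c)) := by
  have h := gaussianReal_map_add_const (μ := 0) (v := v) c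
  rw [zero_add] at h
  rw [← h, Measure.map_apply (by fun_prop) measurableSet_Ioo]
  congr 1
  ext x
  simp only [Set.mem_preimage, Set.mem_Ioo]
  constructor <;> (rintro ⟨h1, h2⟩; constructor <;> linarith)

lemma core_meas (v : ℝ≥0) {c c' : ℝ} (h : |c| ≤ |c'|) (w : ℝ) :
    gaussianReal c' v (Set.Ioo (-w) w) ≤ gaussianReal c v (Set.Ioo (-w) w) := by
  rw [← gauss_abs v c w, ← gauss_abs v c' w]
  set a := |c| with ha
  set a' := |c'| with ha'
  have ha0 : 0 ≤ a := abs_nonneg c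
  have ha0' : a ≤ a' := h
  clear_value a a'
  rcases eq_or_ne v 0 with hv | hv
  · subst hv
    simp only [gaussianReal_zero_var]
    rw [Measure.dirac_apply' _ measurableSet_Ioo, Measure.dirac_apply' _ measurableSet_Ioo]
    by_cases hm : a' ∈ Set.Ioo (-w) w
    · have hm2 : a ∈ Set.Ioo (-w) w := by
        simp only [Set.mem_Ioo] at hm ⊢
        constructor <;> linarith
      simp [hm, hm2]
    · simp [hm]
  · rw [gauss_shift, gauss_shift]
    rcases le_or_gt w 0 with hw | hw
    · have h1 : Set.Ioo (-w-a) (w-a) = ∅ := Set.Ioo_eq_empty (by simp; linarith)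
      have h2 : Set.Ioo (-w-a') (w-a') = ∅ := Set.Ioo_eq_empty (by simp; linarith)
      simp [h1, h2]
    · rw [gaussianReal_apply_eq_integral _ hv, gaussianReal_apply_eq_integral _ hv]
      apply ENNReal.ofReal_le_ofReal
      have e : ∀ b : ℝ, (∫ x in Set.Ioo (-w-b) (w-b), gaussianPDFReal 0 v x)
          = ∫ x in (-w-b)..(w-b), gaussianPDFReal 0 v x := by
        intro b
        rw [intervalIntegral.integral_of_le (by linarith), ← integral_Ioc_eq_integral_Ioo]
      rw [e, e]
      exact core_interval v hw.le ha0 ha0'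


lemma one_sub_cdf (t : ℝ) :
    1 - cdf (gaussianReal 0 1) t = ((gaussianReal 0 1) (Set.Ioi t)).toReal := by
  rw [cdf_eq_real, measureReal_def]
  have h1 : (gaussianReal 0 1) (Set.Ioi t) = 1 - (gaussianReal 0 1) (Set.Iic t) := by
    rw [← Set.compl_Iic, prob_compl_eq_one_sub measurableSet_Iic]
  rw [h1, ENNReal.toReal_sub_of_le prob_le_one ENNReal.one_ne_top, ENNReal.toReal_one]

lemma meas_Ioi_antitone : Antitone (fun t : ℝ => (gaussianReal 0 1) (Set.Ioi t)) :=
  fun _ _ h => measure_mono (Set.Ioi_subset_Ioi h)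

lemma expform (ν : Measure ℝ) [IsProbabilityMeasure ν] :
    ∫ y, 2 * (1 - cdf (gaussianReal 0 1) |y|) ∂ν
      = 2 * (∫⁻ w, ν (Set.Ioo (-w) w) ∂(gaussianReal 0 1)).toReal := by
  set γ := gaussianReal 0 1 with hγ
  have hA : MeasurableSet {p : ℝ × ℝ | |p.2| < p.1} :=
    measurableSet_lt (measurable_abs.comp measurable_snd) measurable_fst
  set A : Set (ℝ × ℝ) := {p | |p.2| < p.1} with hAdef
  have step1 : ∀ y : ℝ, 2 * (1 - cdf γ |y|) = 2 * (γ (Set.Ioi |y|)).toReal := by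
    intro y; rw [one_sub_cdf]
  simp_rw [step1]
  rw [integral_const_mul]
  congr 1
  have hmeas : AEMeasurable (fun y : ℝ => γ (Set.Ioi |y|)) ν :=
    ((meas_Ioi_antitone.measurable).comp measurable_abs).aemeasurable
  rw [integral_toReal hmeas (ae_of_all _ fun y => measure_lt_top _ _)]
  congr 1
  have e1 : ∀ y : ℝ, γ (Set.Ioi |y|) = ∫⁻ w, A.indicator 1 (w, y) ∂γ := by
    intro y
    have : (fun w => A.indicator (1 : ℝ × ℝ → ℝ≥0∞) (w, y)) = (Set.Ioi |y|).indicator 1 := by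
      ext w
      by_cases h : |y| < w <;> simp [hAdef, Set.indicator, h, Set.mem_Ioi]
    rw [this, lintegral_indicator_one measurableSet_Ioi]
  have e2 : ∀ w : ℝ, (∫⁻ y, A.indicator 1 (w, y) ∂ν) = ν (Set.Ioo (-w) w) := by
    intro w
    have hset : {y : ℝ | |y| < w} = Set.Ioo (-w) w := by
      ext y; simp [abs_lt]
    have : (fun y => A.indicator (1 : ℝ × ℝ → ℝ≥0∞) (w, y)) = (Set.Ioo (-w) w).indicator 1 := by
      ext y
      by_cases h : |y| < w
      · simp [hAdef, Set.indicator, h, ← hset]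
      · simp [hAdef, Set.indicator, h, ← hset]
    rw [this, lintegral_indicator_one measurableSet_Ioo]
  simp_rw [e1]
  rw [lintegral_lintegral_swap]
  · exact lintegral_congr e2
  · exact ((measurable_one.indicator hA).comp measurable_swap).aemeasurable


lemma harris (ν : Measure ℝ) [IsProbabilityMeasure ν] (F G : ℝ → ℝ)
    (hF : AEStronglyMeasurable F ν) (hG : AEStronglyMeasurable G ν)
    (hFb : ∀ x, |F x| ≤ 2) (hGb : ∀ x, |G x| ≤ 2)
    (hord : ∀ x y, 0 ≤ (F x - F y) * (G x - G y)) :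
    (∫ x, F x ∂ν) * (∫ x, G x ∂ν) ≤ ∫ x, F x * G x ∂ν := by
  have intF : Integrable F ν :=
    Integrable.mono' (integrable_const 2) hF (ae_of_all _ fun x => by
      simpa using hFb x)
  have intG : Integrable G ν :=
    Integrable.mono' (integrable_const 2) hG (ae_of_all _ fun x => by
      simpa using hGb x)
  have intFG : Integrable (fun x => F x * G x) ν := by
    refine Integrable.mono' (integrable_const 4) (hF.mul hG) (ae_of_all _ fun x => ?_)
    have := mul_le_mul (hFb x) (hGb x) (abs_nonneg _) (by norm_num)
    simpa [abs_mul] using this.trans_eq (by norm_num)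
  set IF := ∫ x, F x ∂ν with hIF
  set IG := ∫ x, G x ∂ν with hIG
  set IFG := ∫ x, F x * G x ∂ν with hIFG
  have inner : ∀ x, (∫ y, (F x - F y) * (G x - G y) ∂ν)
      = F x * G x - F x * IG - G x * IF + IFG := by
    intro x
    have e : (fun y => (F x - F y) * (G x - G y))
        = fun y => F x * G x - (F x * G y + G x * F y) + F y * G y := by
      ext y; ring
    rw [e]
    have i1 : Integrable (fun y => F x * G y + G x * F y) ν := by
      exact (intG.const_mul _).add (intF.const_mul _)
    have i0 : Integrable (fun y => F x * G x - (F x * G y + G x * F y)) ν := by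
      exact (integrable_const _).sub i1
    rw [integral_add i0 intFG, integral_sub (integrable_const _) i1,
      integral_add (intG.const_mul _) (intF.const_mul _),
      integral_const_mul, integral_const_mul, integral_const_mul, integral_const]
    simp only [probReal_univ, smul_eq_mul, mul_one]
    ring
  have h0 : (0:ℝ) ≤ ∫ x, (F x * G x - F x * IG - G x * IF + IFG) ∂ν := by
    have := integral_nonneg (μ := ν)
      (f := fun x => ∫ y, (F x - F y) * (G x - G y) ∂ν)
      (fun x => integral_nonneg fun y => hord x y)
    simpa [inner] using this
  have e2 : (∫ x, (F x * G x - F x * IG - G x * IF + IFG) ∂ν)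
      = IFG - IF * IG - IG * IF + IFG := by
    have j1 : Integrable (fun x => F x * G x - F x * IG) ν := by
      exact intFG.sub (intF.mul_const _)
    have j2 : Integrable (fun x => F x * G x - F x * IG - G x * IF) ν := by
      exact j1.sub (intG.mul_const _)
    rw [integral_add j2 (integrable_const _), integral_sub j1 (intG.mul_const _),
      integral_sub intFG (intF.mul_const _),
      integral_mul_const, integral_mul_const, integral_const]
    simp [measure_univ]
    rfl
  rw [e2] at h0
  linarith



lemma map_affine (c σ : ℝ) :
    Measure.map (fun z => c + σ * z) (gaussianReal 0 1)
      = gaussianReal c (⟨σ^2, sq_nonneg σ⟩ * 1) := by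
  have h1 : Measure.map (σ * ·) (gaussianReal 0 1)
      = gaussianReal (σ * 0) (⟨σ^2, sq_nonneg σ⟩ * 1) := gaussianReal_map_const_mul σ
  have h2 := gaussianReal_map_const_add (μ := σ * 0) (v := ⟨σ^2, sq_nonneg σ⟩ * 1) c
  rw [show (fun z : ℝ => c + σ * z) = (c + ·) ∘ (σ * ·) from rfl,
    ← Measure.map_map (by fun_prop) (by fun_prop), h1, h2]
  norm_num

theorem two_sided_pvalue_cov_nonneg
    {Ω : Type*} [MeasurableSpace Ω] (μ : Measure Ω) [IsProbabilityMeasure μ]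
    (ρ : ℝ) (hρ : |ρ| ≤ 1)
    (X Z Y : Ω → ℝ)
    (hX : Measure.map X μ = gaussianReal 0 1)
    (hZ : Measure.map Z μ = gaussianReal 0 1)
    (hindep : IndepFun X Z μ)
    (hY : ∀ ω, Y ω = ρ * X ω + Real.sqrt (1 - ρ ^ 2) * Z ω) :
    0 ≤ (∫ ω, (2 * (1 - cdf (gaussianReal 0 1) |X ω|)) *
            (2 * (1 - cdf (gaussianReal 0 1) |Y ω|)) ∂μ) -
        (∫ ω, 2 * (1 - cdf (gaussianReal 0 1) |X ω|) ∂μ) *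
          (∫ ω, 2 * (1 - cdf (gaussianReal 0 1) |Y ω|) ∂μ) := by
  set γ := gaussianReal 0 1 with hγdef
  set σ := Real.sqrt (1 - ρ ^ 2) with hσdef
  set v : ℝ≥0 := ⟨σ^2, sq_nonneg σ⟩ * 1 with hvdef
  set F : ℝ → ℝ := fun t => 2 * (1 - cdf (gaussianReal 0 1) |t|) with hFdef
  have hFmeas : Measurable F := by
    apply Measurable.const_mul
    exact measurable_const.sub ((monotone_cdf γ).measurable.comp measurable_abs)
  have hFnonneg : ∀ t, 0 ≤ F t := fun t => by
    have := cdf_le_one γ |t|; simp only [hFdef]; linarith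
  have hFle : ∀ t, F t ≤ 2 := fun t => by
    have := cdf_nonneg γ |t|; simp only [hFdef]; linarith
  have hFb : ∀ t, |F t| ≤ 2 := fun t => abs_le.2 ⟨by linarith [hFnonneg t], hFle t⟩
  have hFanti : ∀ {s t : ℝ}, |s| ≤ |t| → F t ≤ F s := by
    intro s t h
    have := monotone_cdf γ h
    simp only [hFdef]; linarith
  set g : ℝ → ℝ := fun c => ∫ z, F (c + σ * z) ∂γ with hgdef
  have hFint : ∀ c, Integrable (fun z => F (c + σ * z)) γ := fun c =>
    Integrable.mono' (integrable_const 2)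
      (hFmeas.comp (by fun_prop)).aestronglyMeasurable
      (ae_of_all _ fun z => hFb _)
  have g_eq : ∀ c, g c = 2 * (∫⁻ w, gaussianReal c v (Set.Ioo (-w) w) ∂γ).toReal := by
    intro c
    have hm := map_affine c σ
    have e : g c = ∫ y, F y ∂(Measure.map (fun z => c + σ * z) γ) :=
      (integral_map (by fun_prop) (hFmeas.aestronglyMeasurable)).symm
    rw [e, hm, ← hvdef]
    simp only [hFdef]
    exact expform (gaussianReal c v)
  have g_mono : ∀ c c', |c| ≤ |c'| → g c' ≤ g c := by
    intro c c' h
    rw [g_eq, g_eq]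
    have hfin : (∫⁻ w, gaussianReal c v (Set.Ioo (-w) w) ∂γ) ≤ 1 := by
      calc (∫⁻ w, gaussianReal c v (Set.Ioo (-w) w) ∂γ) ≤ ∫⁻ _, 1 ∂γ :=
            lintegral_mono fun w => prob_le_one
        _ = 1 := by simp
    apply mul_le_mul_of_nonneg_left _ (by norm_num)
    exact ENNReal.toReal_mono (ne_top_of_le_ne_top ENNReal.one_ne_top hfin)
      (lintegral_mono fun w => core_meas v h w)
  set G : ℝ → ℝ := fun x => g (ρ * x) with hGdef
  have hGsm : AEStronglyMeasurable G γ := by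
    have h1 : StronglyMeasurable (fun p : ℝ × ℝ => F (p.1 + σ * p.2)) :=
      (hFmeas.comp (by fun_prop)).stronglyMeasurable
    have hg : StronglyMeasurable g := h1.integral_prod_right'
    exact (hg.comp_measurable (by fun_prop)).aestronglyMeasurable
  have hGnonneg : ∀ x, 0 ≤ G x := fun x => integral_nonneg fun z => hFnonneg _
  have hGle : ∀ x, G x ≤ 2 := by
    intro x
    calc G x ≤ ∫ _, (2:ℝ) ∂γ := integral_mono (hFint _) (integrable_const 2) fun z => hFle _
      _ = 2 := by simp
  have hGb : ∀ x, |G x| ≤ 2 := fun x => abs_le.2 ⟨by linarith [hGnonneg x], hGle x⟩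
  have hord : ∀ x y, 0 ≤ (F x - F y) * (G x - G y) := by
    intro x y
    have habs : ∀ {s t : ℝ}, |s| ≤ |t| → |ρ * s| ≤ |ρ * t| := fun h => by
      rw [abs_mul, abs_mul]; exact mul_le_mul_of_nonneg_left h (abs_nonneg ρ)
    rcases le_total |x| |y| with h | h
    · exact mul_nonneg (sub_nonneg.2 (hFanti h)) (sub_nonneg.2 (g_mono _ _ (habs h)))
    · have h1 := hFanti h
      have h2 := g_mono _ _ (habs h)
      nlinarith
  -- plumbing
  have hAX : AEMeasurable X μ := by
    apply aemeasurable_of_map_neZero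
    rw [hX]; infer_instance
  have hAZ : AEMeasurable Z μ := by
    apply aemeasurable_of_map_neZero
    rw [hZ]; infer_instance
  have hpair : Measure.map (fun ω => (X ω, Z ω)) μ = γ.prod γ := by
    exact ((indepFun_iff_map_prod_eq_prod_map_map hAX hAZ).mp hindep).trans
      (by rw [hX, hZ])
  have hYXZ : ∀ ω, Y ω = ρ * X ω + σ * Z ω := hY
  have hφ1 : Measurable (fun p : ℝ × ℝ => F p.1 * F (ρ * p.1 + σ * p.2)) :=
    (hFmeas.comp measurable_fst).mul (hFmeas.comp (by fun_prop))
  have hφ2 : Measurable (fun p : ℝ × ℝ => F (ρ * p.1 + σ * p.2)) :=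
    hFmeas.comp (by fun_prop)
  have hint1 : Integrable (fun p : ℝ × ℝ => F p.1 * F (ρ * p.1 + σ * p.2)) (γ.prod γ) := by
    refine Integrable.mono' (integrable_const 4) hφ1.aestronglyMeasurable
      (ae_of_all _ fun p => ?_)
    have := mul_le_mul (hFb p.1) (hFb (ρ * p.1 + σ * p.2)) (abs_nonneg _) (by norm_num)
    simp only [norm_eq_abs, abs_mul]
    linarith
  have hint2 : Integrable (fun p : ℝ × ℝ => F (ρ * p.1 + σ * p.2)) (γ.prod γ) :=
    Integrable.mono' (integrable_const 2) hφ2.aestronglyMeasurable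
      (ae_of_all _ fun p => hFb _)
  have E1 : ∫ ω, F (X ω) ∂μ = ∫ x, F x ∂γ := by
    rw [← hX, integral_map hAX hFmeas.aestronglyMeasurable]
  have E2 : ∫ ω, F (Y ω) ∂μ = ∫ x, G x ∂γ := by
    have e0 : ∀ ω, F (Y ω) = (fun p : ℝ × ℝ => F (ρ * p.1 + σ * p.2)) (X ω, Z ω) := by
      intro ω; rw [hYXZ ω]
    calc ∫ ω, F (Y ω) ∂μ
        = ∫ ω, (fun p : ℝ × ℝ => F (ρ * p.1 + σ * p.2)) ((fun ω => (X ω, Z ω)) ω) ∂μ := by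
          simp only [e0]
      _ = ∫ p, F (ρ * p.1 + σ * p.2) ∂(γ.prod γ) := by
          rw [← hpair]
          exact (integral_map (hAX.prodMk hAZ) hφ2.aestronglyMeasurable).symm
      _ = ∫ x, ∫ z, F (ρ * x + σ * z) ∂γ ∂γ := integral_prod _ hint2
      _ = ∫ x, G x ∂γ := rfl
  have E3 : ∫ ω, F (X ω) * F (Y ω) ∂μ = ∫ x, F x * G x ∂γ := by
    have e0 : ∀ ω, F (X ω) * F (Y ω)
        = (fun p : ℝ × ℝ => F p.1 * F (ρ * p.1 + σ * p.2)) (X ω, Z ω) := by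
      intro ω; rw [hYXZ ω]
    calc ∫ ω, F (X ω) * F (Y ω) ∂μ
        = ∫ ω, (fun p : ℝ × ℝ => F p.1 * F (ρ * p.1 + σ * p.2)) ((fun ω => (X ω, Z ω)) ω) ∂μ := by
          simp only [e0]
      _ = ∫ p, F p.1 * F (ρ * p.1 + σ * p.2) ∂(γ.prod γ) := by
          rw [← hpair]
          exact (integral_map (hAX.prodMk hAZ) hφ1.aestronglyMeasurable).symm
      _ = ∫ x, ∫ z, F x * F (ρ * x + σ * z) ∂γ ∂γ := integral_prod _ hint1
      _ = ∫ x, F x * G x ∂γ := by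
          refine integral_congr_ae (ae_of_all _ fun x => ?_)
          show (∫ z, F x * F (ρ * x + σ * z) ∂γ) = F x * G x
          rw [integral_const_mul]
  have hFsmγ : AEStronglyMeasurable F γ := hFmeas.aestronglyMeasurable
  have key := harris γ F G hFsmγ hGsm hFb hGb hord
  show 0 ≤ (∫ ω, F (X ω) * F (Y ω) ∂μ) - (∫ ω, F (X ω) ∂μ) * (∫ ω, F (Y ω) ∂μ)
  rw [E1, E2, E3]
  linarith

end Aux
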